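/- Let A₁(η) be as above with all entries nonzero, λ = (10 - 26cos(2η) - 24i·sin(2η))/(26 - 10cos(2η)) = e^{iξ}, and let T_x denote the Chebyshev polynomial of the first kind, T_x(cos ξ) = cos(xξ). For φ₁ ∈ ℂ and the Type 1 eigenfunction Ψ(x) = ((-λ)^x φ₁, -(1 - (3/2)tan η·i)((-λ)^x + (-conj(λ))^x)φ₁, (-conj(λ))^x φ₁) (taking φ₃ = φ₁), the stationary measure is μ(x) = ‖Ψ(x)‖² = (2 + (4 + 9tan²η)·T_x(cos ξ)²)·|φ₁|². -/

import Mathlib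

open Complex Matrix Finset

noncomputable def A₁ (η : ℝ) : Matrix (Fin 3) (Fin 3) ℂ :=
  (1 / 6 : ℂ) • !![-1 - Complex.exp (2 * Complex.I * η), 2 * (1 + Complex.exp (2 * Complex.I * η)),
      5 - Complex.exp (2 * Complex.I * η);
    2 * (1 + Complex.exp (2 * Complex.I * η)), 2 * (1 - 2 * Complex.exp (2 * Complex.I * η)),
      2 * (1 + Complex.exp (2 * Complex.I * η));
    5 - Complex.exp (2 * Complex.I * η), 2 * (1 + Complex.exp (2 * Complex.I * η)),
      -1 - Complex.exp (2 * Complex.I * η)]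

theorem A₁_chebyshev_measure (η : ℝ) (hne : ∀ i j, A₁ η i j ≠ 0) (hcos : Real.cos η ≠ 0)
    (lam : ℂ)
    (hlam : lam = ((10 - 26 * Real.cos (2 * η) : ℂ) - 24 * Real.sin (2 * η) * Complex.I) /
      ((26 - 10 * Real.cos (2 * η) : ℝ) : ℂ))
    (ξ : ℝ) (hξ : lam = Complex.exp (ξ * Complex.I))
    (φ₁ : ℂ)
    (Ψ : ℤ → Fin 3 → ℂ)
    (hΨ : Ψ = fun x => ![(-lam) ^ x * φ₁,
      -((1 : ℂ) - (3 / 2 : ℂ) * Real.tan η * Complex.I) *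
        (((-lam) ^ x + (-(starRingEnd ℂ) lam) ^ x) * φ₁),
      (-(starRingEnd ℂ) lam) ^ x * φ₁]) :
    ∀ x : ℤ, ∑ i, ‖Ψ x i‖ ^ 2 =
      (2 + (4 + 9 * Real.tan η ^ 2) * ((Polynomial.Chebyshev.T ℝ x).eval (Real.cos ξ)) ^ 2)
        * ‖φ₁‖ ^ 2 := by
  intro x
  subst hΨ
  set t := Real.tan η with ht
  have hneg : -lam = Complex.exp (((ξ + Real.pi : ℝ) : ℂ) * Complex.I) := by
    rw [hξ]
    push_cast
    rw [add_mul, Complex.exp_add, Complex.exp_pi_mul_I]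
    ring
  have hcast : ((x : ℂ)) * (((ξ + Real.pi : ℝ) : ℂ) * Complex.I)
      = (((x : ℝ) * (ξ + Real.pi) : ℝ) : ℂ) * Complex.I := by push_cast; ring
  have hc : (-lam) ^ x = Complex.exp ((((x : ℝ) * (ξ + Real.pi) : ℝ) : ℂ) * Complex.I) := by
    rw [hneg, ← Complex.exp_int_mul, hcast]
  have hconj : (-(starRingEnd ℂ) lam) ^ x = (starRingEnd ℂ) ((-lam) ^ x) := by
    rw [map_zpow₀, map_neg]
  have hre : ((-lam) ^ x).re = Real.cos ((x : ℝ) * (ξ + Real.pi)) := by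
    rw [hc]; exact Complex.exp_ofReal_mul_I_re _
  have habs : ‖(-lam) ^ x‖ = 1 := by
    rw [hc]; exact Complex.norm_exp_ofReal_mul_I _
  have hsum : (-lam) ^ x + (starRingEnd ℂ) ((-lam) ^ x)
      = ((2 * ((-lam) ^ x).re : ℝ) : ℂ) := by
    rw [Complex.add_conj]
  have hcos2 : Real.cos ((x : ℝ) * (ξ + Real.pi)) ^ 2 = Real.cos (x * ξ) ^ 2 := by
    have h1 : (x : ℝ) * (ξ + Real.pi) = x * ξ + x * Real.pi := by ring
    have h2 : Real.cos ((x : ℝ) * Real.pi) ^ 2 = 1 := by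
      have := Real.sin_sq_add_cos_sq ((x : ℝ) * Real.pi)
      rw [Real.sin_int_mul_pi] at this
      nlinarith
    rw [h1, Real.cos_add, Real.sin_int_mul_pi, mul_zero, sub_zero, mul_pow, h2, mul_one]
  have hcoef : ‖-((1 : ℂ) - (3 / 2 : ℂ) * (t : ℂ) * Complex.I)‖ ^ 2 = 1 + 9 / 4 * t ^ 2 := by
    rw [norm_neg, Complex.sq_norm]
    simp [Complex.normSq_apply]
    ring
  rw [Fin.sum_univ_three]
  simp only [Matrix.cons_val_zero, Matrix.cons_val_one, Matrix.head_cons, Matrix.cons_val_two,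
    Matrix.tail_cons, hconj]
  rw [hsum]
  have hT : (Polynomial.Chebyshev.T ℝ x).eval (Real.cos ξ) = Real.cos (x * ξ) :=
    Polynomial.Chebyshev.T_real_cos ξ x
  rw [hT]
  rw [norm_mul, norm_mul, norm_mul, norm_mul, habs, RCLike.norm_conj, habs,
    Complex.norm_real, hre, Real.norm_eq_abs]
  rw [mul_pow, mul_pow, mul_pow, _root_.sq_abs, hcoef, mul_pow, hcos2]
  ring
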